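/- Let u ∈ (−1,1), set a := u/sqrt(1−u²), let φ(t) := (2π)^{−1/2}·exp(−t²/2) be the standard Gaussian density, let Φ(t) := N(0,1)((−∞,t]) be the standard Gaussian cumulative distribution function, and let Z be distributed according to the real Gaussian measure N(0,1). Then 2π · E[ ( sqrt(1−u²)·φ(a·Z) + u·Z·Φ(a·Z) )² ] = sqrt(1 − u⁴) + (π/2)·u² + u²·arcsin(u²). Moreover, the function w ↦ sqrt(1−w²) + (π/2)·w + w·arcsin(w) is strictly increasing on [0,1]. -/

import Mathlib

open MeasureTheory ProbabilityTheory Real Set NNReal ENNReal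

noncomputable section ReluAux

/-- standard normal pdf -/
def gg (t : ℝ) : ℝ := (Real.sqrt (2 * Real.pi))⁻¹ * Real.exp (-t ^ 2 / 2)

/-- standard normal cdf -/
def NN (t : ℝ) : ℝ := ((gaussianReal 0 1) (Set.Iic t)).toReal

lemma sqrt2pi_pos : 0 < Real.sqrt (2 * Real.pi) :=
  Real.sqrt_pos.mpr (by positivity)

lemma sq_sqrt2pi : Real.sqrt (2 * Real.pi) ^ 2 = 2 * Real.pi := by
  rw [Real.sq_sqrt (by positivity)]

lemma gg_pos (t : ℝ) : 0 < gg t := by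
  unfold gg; positivity

lemma gg_nonneg (t : ℝ) : 0 ≤ gg t := (gg_pos t).le

lemma gg_le (t : ℝ) : gg t ≤ (Real.sqrt (2 * Real.pi))⁻¹ := by
  unfold gg
  exact mul_le_of_le_one_right (inv_nonneg.mpr sqrt2pi_pos.le)
    (Real.exp_le_one_iff.mpr (by nlinarith [sq_nonneg t]))

lemma gg_cont : Continuous gg := by
  unfold gg; fun_prop

lemma hasDerivAt_gg (t : ℝ) : HasDerivAt gg (-t * gg t) t := by
  have h1 : HasDerivAt (fun t : ℝ => -t ^ 2 / 2) (-t) t := by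
    have := ((hasDerivAt_pow 2 t).neg).div_const 2
    simpa using this.congr_deriv (by ring)
  have h2 := (h1.exp).const_mul ((Real.sqrt (2 * Real.pi))⁻¹)
  unfold gg
  exact h2.congr_deriv (by ring)

lemma gpdf_eq (x : ℝ) : gaussianPDFReal 0 1 x = gg x := by
  unfold gaussianPDFReal gg
  norm_num

lemma integrable_gg : Integrable gg := by
  have := integrable_gaussianPDFReal 0 1
  simpa [funext gpdf_eq] using this

/-- conversion of gaussianReal integral to Lebesgue integral against gg -/
lemma integral_gauss (f : ℝ → ℝ) :
    ∫ z, f z ∂(gaussianReal 0 1) = ∫ z, f z * gg z := by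
  rw [gaussianReal_of_var_ne_zero 0 one_ne_zero]
  have hd : gaussianPDF 0 1 = fun x => ((Real.toNNReal (gaussianPDFReal 0 1 x) : ℝ≥0) : ℝ≥0∞) :=
    rfl
  rw [hd, integral_withDensity_eq_integral_smul
    ((measurable_gaussianPDFReal 0 1).real_toNNReal) f]
  congr 1
  funext x
  rw [NNReal.smul_def, smul_eq_mul, Real.coe_toNNReal _ (gaussianPDFReal_nonneg 0 1 x),
    gpdf_eq, mul_comm]

lemma integral_gg : ∫ z, gg z = 1 := by
  have := integral_gaussianPDFReal_eq_one 0 (one_ne_zero)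
  simpa [funext gpdf_eq] using this

lemma NN_eq (t : ℝ) : NN t = ∫ z in Set.Iic t, gg z := by
  unfold NN
  rw [gaussianReal_apply_eq_integral 0 one_ne_zero]
  rw [ENNReal.toReal_ofReal
    (setIntegral_nonneg measurableSet_Iic fun x _ => gaussianPDFReal_nonneg 0 1 x)]
  simp_rw [gpdf_eq]

lemma NN_nonneg (t : ℝ) : 0 ≤ NN t := ENNReal.toReal_nonneg

lemma NN_le_one (t : ℝ) : NN t ≤ 1 := by
  unfold NN
  have := prob_le_one (μ := gaussianReal 0 1) (s := Set.Iic t)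
  exact ENNReal.toReal_le_of_le_ofReal zero_le_one (by simpa using this)

lemma hasDerivAt_NN (t : ℝ) : HasDerivAt NN (gg t) t := by
  have key : ∀ s : ℝ, NN s = NN 0 + ∫ z in (0 : ℝ)..s, gg z := by
    intro s
    rw [NN_eq, NN_eq, ← intervalIntegral.integral_Iic_sub_Iic
      integrable_gg.integrableOn integrable_gg.integrableOn]
    ring
  have h : HasDerivAt (fun s => NN 0 + ∫ z in (0 : ℝ)..s, gg z) (gg t) t := by
    refine HasDerivAt.const_add _ ?_
    exact intervalIntegral.integral_hasDerivAt_right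
      (gg_cont.intervalIntegrable 0 t)
      (gg_cont.stronglyMeasurable.stronglyMeasurableAtFilter)
      gg_cont.continuousAt
  exact h.congr_of_eventuallyEq (Filter.Eventually.of_forall key)

lemma NN_cont : Continuous NN :=
  continuous_iff_continuousAt.mpr fun t => (hasDerivAt_NN t).continuousAt

lemma NN_zero : NN 0 = 1 / 2 := by
  have h1 : ∫ z in Set.Ioi (0:ℝ), gg z = 1 / 2 := by
    unfold gg
    rw [integral_const_mul]
    have : ∀ z : ℝ, Real.exp (-z ^ 2 / 2) = Real.exp (-(1/2 : ℝ) * z ^ 2) := by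
      intro z; ring_nf
    simp_rw [this]
    rw [integral_gaussian_Ioi (1/2 : ℝ)]
    rw [show Real.pi / (1/2 : ℝ) = 2 * Real.pi by ring]
    rw [inv_mul_eq_div, div_eq_iff (by positivity)]
    ring
  have h2 : (∫ z in Set.Iic (0:ℝ), gg z) + ∫ z in Set.Ioi (0:ℝ), gg z = 1 := by
    rw [← integral_gg]
    rw [← setIntegral_union (Set.Iic_disjoint_Ioi le_rfl) measurableSet_Ioi
      integrable_gg.integrableOn integrable_gg.integrableOn, Set.Iic_union_Ioi,
      setIntegral_univ]
  rw [NN_eq]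
  linarith

/-- master integrability lemma: continuous functions dominated by `C·|z|^k·e^{-z²/2}`, `k ≤ 2` -/
lemma integrable_aux {f : ℝ → ℝ} (hf : Continuous f) (k : ℕ) (hk : k ≤ 2) (C : ℝ)
    (hb : ∀ z, |f z| ≤ C * |z| ^ k * Real.exp (-z ^ 2 / 2)) : Integrable f := by
  have base : Integrable (fun z : ℝ => (4 * |C|) * Real.exp (-(1/4 : ℝ) * z ^ 2)) :=
    (integrable_exp_neg_mul_sq (by norm_num : (0:ℝ) < 1/4)).const_mul _
  refine base.mono' hf.aestronglyMeasurable (Filter.Eventually.of_forall fun z => ?_)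
  rw [Real.norm_eq_abs]
  have hC : C ≤ |C| := le_abs_self C
  have hkey : |z| ^ k ≤ 4 * Real.exp (z ^ 2 / 4) := by
    have he := Real.add_one_le_exp (z ^ 2 / 4)
    have h2 := sq_nonneg (|z| / 2 - 1)
    have h3 := sq_abs z
    interval_cases k <;> nlinarith [abs_nonneg z, Real.exp_pos (z^2/4)]
  calc |f z| ≤ C * |z| ^ k * Real.exp (-z ^ 2 / 2) := hb z
    _ ≤ |C| * (4 * Real.exp (z ^ 2 / 4)) * Real.exp (-z ^ 2 / 2) := by
        have h4 : 0 ≤ |z| ^ k := by positivity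
        have h5 : C * |z| ^ k ≤ |C| * (4 * Real.exp (z ^ 2 / 4)) := by
          calc C * |z| ^ k ≤ |C| * |z| ^ k := by nlinarith
            _ ≤ |C| * (4 * Real.exp (z ^ 2 / 4)) := by
                have := abs_nonneg C; nlinarith
        have := Real.exp_pos (-z ^ 2 / 2)
        nlinarith
    _ = 4 * |C| * Real.exp (-(1/4 : ℝ) * z ^ 2) := by
        have hx : Real.exp (z ^ 2 / 4) * Real.exp (-z ^ 2 / 2) = Real.exp (-(1/4 : ℝ) * z ^ 2) := by
          rw [← Real.exp_add]; congr 1; ring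
        rw [show |C| * (4 * Real.exp (z ^ 2 / 4)) * Real.exp (-z ^ 2 / 2)
          = 4 * |C| * (Real.exp (z ^ 2 / 4) * Real.exp (-z ^ 2 / 2)) from by ring, hx]

lemma exp_sq_gauss (a : ℝ) :
    ∀ z : ℝ, Real.exp (-(a*z) ^ 2 / 2) ^ 2 * Real.exp (-z ^ 2 / 2)
      = Real.exp (-((1 + 2*a^2)/2) * z ^ 2) := by
  intro z
  rw [sq (Real.exp _), ← Real.exp_add, ← Real.exp_add]
  congr 1; ring

lemma LA (a : ℝ) :
    ∫ z, gg (a*z) ^ 2 * gg z = (2 * Real.pi * Real.sqrt (1 + 2*a^2))⁻¹ := by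
  have hq : (0:ℝ) < 1 + 2*a^2 := by positivity
  have e : ∀ z : ℝ, gg (a*z) ^ 2 * gg z
      = ((Real.sqrt (2*Real.pi))⁻¹) ^ 3 * Real.exp (-((1 + 2*a^2)/2) * z ^ 2) := by
    intro z
    unfold gg
    rw [mul_pow, show ((Real.sqrt (2*Real.pi))⁻¹ ^ 2 * Real.exp (-(a*z) ^ 2 / 2) ^ 2) *
      ((Real.sqrt (2*Real.pi))⁻¹ * Real.exp (-z ^ 2 / 2)) =
      ((Real.sqrt (2*Real.pi))⁻¹) ^ 3 * (Real.exp (-(a*z) ^ 2 / 2) ^ 2 * Real.exp (-z ^ 2 / 2))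
      from by ring, exp_sq_gauss a z]
  rw [funext e, integral_const_mul, integral_gaussian]
  have h1 : Real.pi / ((1 + 2*a^2)/2) = 2 * Real.pi / (1 + 2*a^2) := by
    rw [div_div_eq_mul_div]; ring
  rw [h1, Real.sqrt_div (by positivity : (0:ℝ) ≤ 2 * Real.pi)]
  have hq' : (0:ℝ) < Real.sqrt (1 + 2*a^2) := Real.sqrt_pos.mpr hq
  have hG : Real.sqrt (2*Real.pi) ^ 2 = 2*Real.pi := Real.sq_sqrt (by positivity)
  rw [show ((Real.sqrt (2*Real.pi))⁻¹) ^ 3 * (Real.sqrt (2*Real.pi) / Real.sqrt (1 + 2*a^2))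
    = (Real.sqrt (2*Real.pi) ^ 2 * Real.sqrt (1 + 2*a^2))⁻¹ from by
      field_simp, hG]

-- integrability instances needed later
lemma int_A (a : ℝ) : Integrable (fun z => gg (a*z) ^ 2 * gg z) := by
  refine integrable_aux (by unfold gg; fun_prop) 0 (by norm_num)
    ((Real.sqrt (2*Real.pi))⁻¹ ^ 3) fun z => ?_
  have h1 := gg_le (a*z); have h2 := gg_nonneg (a*z); have h3 := gg_nonneg z
  have h4 : gg z = (Real.sqrt (2*Real.pi))⁻¹ * Real.exp (-z^2/2) := rfl
  have h5 : (0:ℝ) < (Real.sqrt (2*Real.pi))⁻¹ := inv_pos.mpr sqrt2pi_pos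
  rw [abs_of_nonneg (by positivity)]
  have he := Real.exp_pos (-z^2/2)
  calc gg (a*z) ^ 2 * gg z ≤ (Real.sqrt (2*Real.pi))⁻¹ ^ 2 * gg z :=
        mul_le_mul_of_nonneg_right (pow_le_pow_left₀ h2 h1 2) h3
    _ = (Real.sqrt (2*Real.pi))⁻¹ ^ 3 * |z| ^ 0 * Real.exp (-z^2/2) := by
        rw [h4]; ring

lemma int_B (a : ℝ) : Integrable (fun z => z * gg (a*z) * NN (a*z) * gg z) := by
  refine integrable_aux (by have := NN_cont; have := gg_cont; fun_prop) 1 (by norm_num)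
    ((Real.sqrt (2*Real.pi))⁻¹ ^ 2) fun z => ?_
  have h1 := gg_le (a*z); have h2 := gg_nonneg (a*z); have h3 := gg_nonneg z
  have h4 : gg z = (Real.sqrt (2*Real.pi))⁻¹ * Real.exp (-z^2/2) := rfl
  have h5 : (0:ℝ) < (Real.sqrt (2*Real.pi))⁻¹ := inv_pos.mpr sqrt2pi_pos
  have h6 := NN_nonneg (a*z); have h7 := NN_le_one (a*z)
  have he := Real.exp_pos (-z^2/2)
  rw [abs_mul, abs_mul, abs_mul, abs_of_nonneg h2, abs_of_nonneg h6, abs_of_nonneg h3]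
  calc |z| * gg (a*z) * NN (a*z) * gg z ≤ |z| * (Real.sqrt (2*Real.pi))⁻¹ * 1 * gg z := by
        refine mul_le_mul_of_nonneg_right ?_ h3
        refine mul_le_mul ?_ h7 h6 (by positivity)
        exact mul_le_mul_of_nonneg_left h1 (abs_nonneg z)
    _ ≤ (Real.sqrt (2*Real.pi))⁻¹ ^ 2 * |z| ^ 1 * Real.exp (-z^2/2) := by
        rw [h4]; have := abs_nonneg z; nlinarith

lemma int_Bgg (a : ℝ) : Integrable (fun z => gg z * gg (a*z) ^ 2) := by
  have := int_A a
  simpa [mul_comm] using this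

lemma int_C (a : ℝ) : Integrable (fun z => NN (a*z) ^ 2 * gg z) := by
  refine integrable_aux (by have := NN_cont; have := gg_cont; fun_prop) 0 (by norm_num)
    ((Real.sqrt (2*Real.pi))⁻¹) fun z => ?_
  have h3 := gg_nonneg z
  have h4 : gg z = (Real.sqrt (2*Real.pi))⁻¹ * Real.exp (-z^2/2) := rfl
  have h5 : (0:ℝ) < (Real.sqrt (2*Real.pi))⁻¹ := inv_pos.mpr sqrt2pi_pos
  have h6 := NN_nonneg (a*z); have h7 := NN_le_one (a*z)
  have he := Real.exp_pos (-z^2/2)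
  rw [abs_of_nonneg (by positivity)]
  calc NN (a*z) ^ 2 * gg z ≤ 1 * gg z :=
        mul_le_mul_of_nonneg_right (by nlinarith : NN (a*z) ^ 2 ≤ 1) h3
    _ ≤ (Real.sqrt (2*Real.pi))⁻¹ * |z| ^ 0 * Real.exp (-z^2/2) := by rw [h4]; nlinarith

lemma int_D (a : ℝ) : Integrable (fun z => z ^ 2 * NN (a*z) ^ 2 * gg z) := by
  refine integrable_aux (by have := NN_cont; have := gg_cont; fun_prop) 2 (by norm_num)
    ((Real.sqrt (2*Real.pi))⁻¹) fun z => ?_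
  have h3 := gg_nonneg z
  have h4 : gg z = (Real.sqrt (2*Real.pi))⁻¹ * Real.exp (-z^2/2) := rfl
  have h5 : (0:ℝ) < (Real.sqrt (2*Real.pi))⁻¹ := inv_pos.mpr sqrt2pi_pos
  have h6 := NN_nonneg (a*z); have h7 := NN_le_one (a*z)
  have he := Real.exp_pos (-z^2/2)
  rw [abs_of_nonneg (by positivity)]
  have hz2 : z ^ 2 = |z| ^ 2 := (sq_abs z).symm
  calc z ^ 2 * NN (a*z) ^ 2 * gg z ≤ z ^ 2 * 1 * gg z := by
        refine mul_le_mul_of_nonneg_right ?_ h3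
        exact mul_le_mul_of_nonneg_left (by nlinarith : NN (a*z) ^ 2 ≤ 1) (sq_nonneg z)
    _ ≤ (Real.sqrt (2*Real.pi))⁻¹ * |z| ^ 2 * Real.exp (-z^2/2) := by
        rw [h4, ← hz2]; nlinarith [sq_nonneg z]


lemma hasDerivAt_gga (a t : ℝ) : HasDerivAt (fun z => gg (a*z)) (-(a^2*t) * gg (a*t)) t := by
  have hf : HasDerivAt (fun z : ℝ => a * z) a t := by
    simpa using (hasDerivAt_id t).const_mul a
  have h := (hasDerivAt_gg (a*t)).comp t hf
  exact h.congr_deriv (by ring)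

lemma hasDerivAt_NNa (a t : ℝ) : HasDerivAt (fun z => NN (a*z)) (a * gg (a*t)) t := by
  have hf : HasDerivAt (fun z : ℝ => a * z) a t := by
    simpa using (hasDerivAt_id t).const_mul a
  have h := (hasDerivAt_NN (a*t)).comp t hf
  exact h.congr_deriv (by ring)

lemma int_F1 (a : ℝ) : Integrable (fun z => gg z * gg (a*z) * NN (a*z)) := by
  refine integrable_aux (by have := NN_cont; have := gg_cont; fun_prop) 0 (by norm_num)
    ((Real.sqrt (2*Real.pi))⁻¹ ^ 2) fun z => ?_
  have h1 := gg_le (a*z); have h2 := gg_nonneg (a*z); have h3 := gg_nonneg z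
  have h4 : gg z = (Real.sqrt (2*Real.pi))⁻¹ * Real.exp (-z^2/2) := rfl
  have h6 := NN_nonneg (a*z); have h7 := NN_le_one (a*z)
  rw [abs_of_nonneg (by positivity)]
  calc gg z * gg (a*z) * NN (a*z) ≤ gg z * (Real.sqrt (2*Real.pi))⁻¹ * 1 := by
        refine mul_le_mul (mul_le_mul_of_nonneg_left h1 h3) h7 h6 (by positivity)
    _ = (Real.sqrt (2*Real.pi))⁻¹ ^ 2 * |z| ^ 0 * Real.exp (-z^2/2) := by rw [h4]; ring

lemma int_F2 (a : ℝ) : Integrable (fun z => z * gg z * NN (a*z) ^ 2) := by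
  refine integrable_aux (by have := NN_cont; have := gg_cont; fun_prop) 1 (by norm_num)
    ((Real.sqrt (2*Real.pi))⁻¹) fun z => ?_
  have h3 := gg_nonneg z
  have h4 : gg z = (Real.sqrt (2*Real.pi))⁻¹ * Real.exp (-z^2/2) := rfl
  have h6 := NN_nonneg (a*z); have h7 := NN_le_one (a*z)
  rw [abs_mul, abs_mul, abs_of_nonneg h3, abs_of_nonneg (by positivity : (0:ℝ) ≤ NN (a*z) ^ 2)]
  calc |z| * gg z * NN (a*z) ^ 2 ≤ |z| * gg z * 1 := by
        refine mul_le_mul_of_nonneg_left (by nlinarith) (by positivity)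
    _ = (Real.sqrt (2*Real.pi))⁻¹ * |z| ^ 1 * Real.exp (-z^2/2) := by rw [h4]; ring

lemma LB (a : ℝ) : ∫ z, z * gg (a*z) * NN (a*z) * gg z
    = a / (1+a^2) * (2 * Real.pi * Real.sqrt (1+2*a^2))⁻¹ := by
  have hderiv : ∀ z : ℝ, HasDerivAt (fun z => gg z * gg (a*z) * NN (a*z))
      ((-(1+a^2)) * (z * gg (a*z) * NN (a*z) * gg z) + a * (gg z * gg (a*z)^2)) z := by
    intro z
    have h := ((hasDerivAt_gg z).mul (hasDerivAt_gga a z)).mul (hasDerivAt_NNa a z)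
    exact h.congr_deriv (by simp only [Pi.mul_apply]; ring)
  have hF' : Integrable (fun z => (-(1+a^2)) * (z * gg (a*z) * NN (a*z) * gg z)
      + a * (gg z * gg (a*z)^2)) :=
    ((int_B a).const_mul _).add ((int_Bgg a).const_mul _)
  have h0 := integral_eq_zero_of_hasDerivAt_of_integrable hderiv hF' (int_F1 a)
  rw [integral_add ((int_B a).const_mul _) ((int_Bgg a).const_mul _),
    integral_const_mul, integral_const_mul] at h0
  have hA : ∫ z, gg z * gg (a*z)^2 = (2 * Real.pi * Real.sqrt (1+2*a^2))⁻¹ := by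
    rw [← LA a]; congr 1; funext z; ring
  rw [hA] at h0
  have h1pa : (0:ℝ) < 1+a^2 := by positivity
  rw [div_mul_eq_mul_div, eq_div_iff h1pa.ne']
  linear_combination -h0

lemma LD (a : ℝ) : ∫ z, z^2 * NN (a*z)^2 * gg z
    = (∫ z, NN (a*z)^2 * gg z) + 2*a*(∫ z, z * gg (a*z) * NN (a*z) * gg z) := by
  have hderiv : ∀ z : ℝ, HasDerivAt (fun z => z * gg z * NN (a*z) ^ 2)
      (NN (a*z)^2 * gg z - z^2 * NN (a*z)^2 * gg z
        + 2*a*(z * gg (a*z) * NN (a*z) * gg z)) z := by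
    intro z
    have h := ((hasDerivAt_id' (x := z)).mul (hasDerivAt_gg z)).mul ((hasDerivAt_NNa a z).pow 2)
    exact h.congr_deriv (by simp only [Pi.mul_apply, Pi.pow_apply]; push_cast; ring)
  have i1 : Integrable (fun z => NN (a*z)^2 * gg z - z^2 * NN (a*z)^2 * gg z) :=
    (int_C a).sub (int_D a)
  have hF' : Integrable (fun z => NN (a*z)^2 * gg z - z^2 * NN (a*z)^2 * gg z
      + 2*a*(z * gg (a*z) * NN (a*z) * gg z)) :=
    i1.add ((int_B a).const_mul _)
  have h0 := integral_eq_zero_of_hasDerivAt_of_integrable hderiv hF' (int_F2 a)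
  rw [integral_add i1 ((int_B a).const_mul _),
    integral_sub (int_C a) (int_D a), integral_const_mul] at h0
  linarith


lemma int_bound1 : Integrable (fun z : ℝ => 2 * (Real.sqrt (2*Real.pi))⁻¹ * (|z| * gg z)) := by
  refine integrable_aux (by have := gg_cont; fun_prop) 1 (by norm_num)
    (2 * (Real.sqrt (2*Real.pi))⁻¹ ^ 2) fun z => ?_
  have h4 : gg z = (Real.sqrt (2*Real.pi))⁻¹ * Real.exp (-z^2/2) := rfl
  rw [abs_of_nonneg (mul_nonneg (by positivity) (mul_nonneg (abs_nonneg z) (gg_nonneg z))), h4]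
  rw [pow_one]
  ring_nf
  exact le_rfl

lemma hasDerivAt_Cfun (x : ℝ) : HasDerivAt (fun a => ∫ z, NN (a*z)^2 * gg z)
    (x / (1+x^2) * (2 * Real.pi * Real.sqrt (1+2*x^2))⁻¹ * 2) x := by
  have key := hasDerivAt_integral_of_dominated_loc_of_deriv_le
    (F := fun a z => NN (a*z)^2 * gg z)
    (F' := fun a z => 2 * (z * gg (a*z) * NN (a*z) * gg z))
    (μ := (volume : Measure ℝ)) (x₀ := x)
    (bound := fun z => 2 * (Real.sqrt (2*Real.pi))⁻¹ * (|z| * gg z))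
    (Metric.ball_mem_nhds x one_pos)
    (Filter.Eventually.of_forall fun y =>
      (by have := NN_cont; have := gg_cont; fun_prop :
        Continuous fun z => NN (y*z)^2 * gg z).aestronglyMeasurable)
    (int_C x)
    (by have := NN_cont; have := gg_cont; fun_prop :
      Continuous fun z => 2 * (z * gg (x*z) * NN (x*z) * gg z)).aestronglyMeasurable
    (Filter.Eventually.of_forall fun z => fun y _ => by
      have h1 := gg_le (y*z); have h2 := gg_nonneg (y*z); have h3 := gg_nonneg z
      have h6 := NN_nonneg (y*z); have h7 := NN_le_one (y*z)
      rw [Real.norm_eq_abs, abs_mul, abs_mul, abs_mul, abs_mul,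
        abs_of_nonneg h2, abs_of_nonneg h6, abs_of_nonneg h3]
      rw [show |(2:ℝ)| = 2 by norm_num]
      calc 2 * (|z| * gg (y*z) * NN (y*z) * gg z)
          ≤ 2 * (|z| * (Real.sqrt (2*Real.pi))⁻¹ * 1 * gg z) := by
            refine mul_le_mul_of_nonneg_left ?_ (by norm_num)
            refine mul_le_mul_of_nonneg_right ?_ h3
            refine mul_le_mul ?_ h7 h6 (by positivity)
            exact mul_le_mul_of_nonneg_left h1 (abs_nonneg z)
        _ = 2 * (Real.sqrt (2*Real.pi))⁻¹ * (|z| * gg z) := by ring)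
    int_bound1
    (Filter.Eventually.of_forall fun z => fun y _ => by
      have hin : HasDerivAt (fun a : ℝ => NN (a*z)) (gg (y*z) * z) y := by
        have hf : HasDerivAt (fun a : ℝ => a * z) z y := by
          simpa using (hasDerivAt_id y).mul_const z
        exact ((hasDerivAt_NN (y*z)).comp y hf)
      have h := ((hin.pow 2).mul_const (gg z))
      exact h.congr_deriv (by push_cast; ring))
  have h2 := key.2
  have heq : (∫ z, 2 * (z * gg (x*z) * NN (x*z) * gg z))
      = x / (1+x^2) * (2 * Real.pi * Real.sqrt (1+2*x^2))⁻¹ * 2 := by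
    rw [integral_const_mul, LB x]; ring
  rwa [heq] at h2


lemma hR_deriv (x : ℝ) :
    HasDerivAt (fun x : ℝ => 1/4 + (2*Real.pi)⁻¹ * Real.arcsin (x^2/(1+x^2)))
      (x / (1+x^2) * (2 * Real.pi * Real.sqrt (1+2*x^2))⁻¹ * 2) x := by
  have hden : ((1:ℝ)+x^2) ≠ 0 := by positivity
  have hr : HasDerivAt (fun x : ℝ => x^2/(1+x^2)) (2*x/(1+x^2)^2) x := by
    have h := (hasDerivAt_pow 2 x).div ((hasDerivAt_pow 2 x).const_add 1) hden
    exact h.congr_deriv (by push_cast; ring_nf)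
  have hlt : x^2/(1+x^2) < 1 := (div_lt_one (by positivity)).mpr (by nlinarith)
  have hge : (0:ℝ) ≤ x^2/(1+x^2) := by positivity
  have hne1 : x^2/(1+x^2) ≠ 1 := ne_of_lt hlt
  have hnen : x^2/(1+x^2) ≠ -1 := by intro h; rw [h] at hge; norm_num at hge
  have harc := (Real.hasDerivAt_arcsin hnen hne1).comp x hr
  have hsq : Real.sqrt (1 - (x^2/(1+x^2))^2) = Real.sqrt (1+2*x^2)/(1+x^2) := by
    have h1 : 1 - (x^2/(1+x^2))^2 = (1+2*x^2)/((1+x^2)^2) := by field_simp; ring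
    rw [h1, Real.sqrt_div (by positivity), Real.sqrt_sq (by positivity)]
  have h := (harc.const_mul ((2*Real.pi)⁻¹)).const_add (1/4)
  refine h.congr_deriv ?_
  rw [hsq]
  have hs : (0:ℝ) < Real.sqrt (1+2*x^2) := Real.sqrt_pos.mpr (by positivity)
  have hpi : (0:ℝ) < Real.pi := Real.pi_pos
  field_simp

lemma LC (a : ℝ) : ∫ z, NN (a*z)^2 * gg z
    = 1/4 + (2*Real.pi)⁻¹ * Real.arcsin (a^2/(1+a^2)) := by
  have hh : ∀ x : ℝ, HasDerivAt
      (fun x => (∫ z, NN (x*z)^2 * gg z)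
        - (1/4 + (2*Real.pi)⁻¹ * Real.arcsin (x^2/(1+x^2)))) 0 x := by
    intro x
    have := (hasDerivAt_Cfun x).sub (hR_deriv x)
    exact this.congr_deriv (by ring)
  have hconst := is_const_of_deriv_eq_zero (𝕜 := ℝ)
    (fun x => (hh x).differentiableAt) (fun x => (hh x).deriv) a 0
  have hC0 : ∫ z, NN ((0:ℝ)*z)^2 * gg z = 1/4 := by
    have : ∀ z : ℝ, NN ((0:ℝ)*z)^2 * gg z = (1/4 : ℝ) * gg z := by
      intro z; rw [zero_mul, NN_zero]; ring
    rw [funext this, integral_const_mul, integral_gg]; norm_num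
  have hR0 : (1/4 : ℝ) + (2*Real.pi)⁻¹ * Real.arcsin ((0:ℝ)^2/(1+(0:ℝ)^2)) = 1/4 := by
    norm_num
  rw [hC0, hR0] at hconst
  linarith


lemma final_algebra (u S P Ar : ℝ) (hS : 0 < S) (hP : 0 < P)
    (hS2 : S^2 = 1 - u^2) (hP2 : P^2 = 1+u^2) :
    2*Real.pi * (S^2 * (S/(2*Real.pi*P)) + 2*S*u*((u*S) * (S/(2*Real.pi*P)))
      + u^2*((1/4 + (2*Real.pi)⁻¹ * Ar) + 2*(u/S)*((u*S) * (S/(2*Real.pi*P)))))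
    = P*S + Real.pi/2*u^2 + u^2*Ar := by
  have key : S^3 + 2*u^2*S^3 + 2*u^4*S = P^2*S := by
    linear_combination (S*(1+2*u^2))*hS2 - S*hP2
  have hpi := Real.pi_pos
  field_simp
  linear_combination 8 * key

lemma mono_part : StrictMonoOn
    (fun w : ℝ => Real.sqrt (1 - w ^ 2) + (Real.pi / 2) * w + w * Real.arcsin w)
    (Set.Icc (0 : ℝ) 1) := by
  apply strictMonoOn_of_deriv_pos (convex_Icc 0 1)
  · refine Continuous.continuousOn ?_
    exact ((Real.continuous_sqrt.comp (continuous_const.sub (continuous_pow 2))).add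
      (continuous_const.mul continuous_id)).add
      (continuous_id.mul Real.continuous_arcsin)
  · rw [interior_Icc]
    intro x hx
    obtain ⟨hx0, hx1⟩ := hx
    have h1pos : (0:ℝ) < 1 - x^2 := by nlinarith
    have hne : x ≠ -1 := by intro h; rw [h] at hx0; norm_num at hx0
    have hne1 : x ≠ 1 := ne_of_lt hx1
    have hsq : HasDerivAt (fun w : ℝ => Real.sqrt (1 - w ^ 2))
        (-x / Real.sqrt (1 - x^2)) x := by
      have hin : HasDerivAt (fun w : ℝ => 1 - w ^ 2) (-(2*x)) x := by
        have := ((hasDerivAt_pow 2 x).const_sub 1)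
        exact this.congr_deriv (by push_cast; ring)
      have h := (Real.hasDerivAt_sqrt h1pos.ne').comp x hin
      refine h.congr_deriv ?_
      have hs : (0:ℝ) < Real.sqrt (1 - x^2) := Real.sqrt_pos.mpr h1pos
      field_simp
    have harc : HasDerivAt (fun w : ℝ => w * Real.arcsin w)
        (Real.arcsin x + x * (1 / Real.sqrt (1 - x^2))) x := by
      have h := (hasDerivAt_id' (x := x)).mul (Real.hasDerivAt_arcsin hne hne1)
      refine h.congr_deriv ?_
      rw [show (1:ℝ) - x^2 = 1 - x^2 from rfl]
      ring_nf
    have htot : HasDerivAt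
        (fun w : ℝ => Real.sqrt (1 - w ^ 2) + (Real.pi / 2) * w + w * Real.arcsin w)
        (Real.pi/2 + Real.arcsin x) x := by
      have h := (hsq.add ((hasDerivAt_id' (x := x)).const_mul (Real.pi/2))).add harc
      refine h.congr_deriv ?_
      have hs : (0:ℝ) < Real.sqrt (1 - x^2) := Real.sqrt_pos.mpr h1pos
      field_simp
      ring
    rw [htot.deriv]
    have := Real.arcsin_nonneg.mpr hx0.le
    have := Real.pi_pos
    linarith

end ReluAux

/-- Closed-form overlap divergence for the ReLU link (Theorem 2, part 2.(a)(iii)):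
with `a = u/√(1−u²)`, `φ` the standard Gaussian density and `Φ` its CDF,
`2π·E[(√(1−u²)φ(aZ) + uZΦ(aZ))²] = √(1−u⁴) + (π/2)u² + u²·arcsin(u²)`, and
`w ↦ √(1−w²) + (π/2)w + w·arcsin(w)` is strictly increasing on `[0,1]`. -/
theorem relu_overlap_divergence_closed_form
    (u : ℝ) (hu : u ∈ Set.Ioo (-1 : ℝ) 1)
    (a : ℝ) (ha : a = u / Real.sqrt (1 - u ^ 2))
    (φ Φ : ℝ → ℝ)
    (hφ : φ = fun t => (Real.sqrt (2 * Real.pi))⁻¹ * Real.exp (-t ^ 2 / 2))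
    (hΦ : Φ = fun t => ((gaussianReal 0 1) (Set.Iic t)).toReal) :
    (2 * Real.pi
        * ∫ z, (Real.sqrt (1 - u ^ 2) * φ (a * z) + u * z * Φ (a * z)) ^ 2
            ∂(gaussianReal 0 1)
      = Real.sqrt (1 - u ^ 4) + (Real.pi / 2) * u ^ 2
        + u ^ 2 * Real.arcsin (u ^ 2)) ∧
    StrictMonoOn
      (fun w : ℝ => Real.sqrt (1 - w ^ 2) + (Real.pi / 2) * w + w * Real.arcsin w)
      (Set.Icc (0 : ℝ) 1) := by
  obtain ⟨hu1, hu2⟩ := hu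
  have h1u : (0:ℝ) < 1 - u ^ 2 := by nlinarith
  set S := Real.sqrt (1 - u ^ 2) with hSdef
  have hS : 0 < S := Real.sqrt_pos.mpr h1u
  have hS2 : S ^ 2 = 1 - u ^ 2 := Real.sq_sqrt h1u.le
  set P := Real.sqrt (1 + u ^ 2) with hPdef
  have hP : 0 < P := Real.sqrt_pos.mpr (by positivity)
  have hP2 : P ^ 2 = 1 + u ^ 2 := Real.sq_sqrt (by positivity)
  have hgg : φ = gg := hφ.trans rfl
  have hNN : Φ = NN := hΦ.trans rfl
  refine ⟨?_, mono_part⟩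
  rw [hgg, hNN]
  have hane : S ≠ 0 := hS.ne'
  have e1 : a ^ 2 = u ^ 2 / S ^ 2 := by rw [ha, div_pow]
  have e2 : 1 + a ^ 2 = 1 / S ^ 2 := by
    rw [e1]; field_simp; linarith [hS2]
  have k2 : 1 + 2 * a ^ 2 = (1 + u ^ 2) / S ^ 2 := by
    rw [e1]; field_simp; linarith [hS2]
  have k3 : Real.sqrt (1 + 2 * a ^ 2) = P / S := by
    rw [k2, Real.sqrt_div (by positivity), Real.sqrt_sq hS.le]
  have k4 : a ^ 2 / (1 + a ^ 2) = u ^ 2 := by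
    rw [e2, e1]; field_simp
  have hfrac : a / (1 + a ^ 2) = u * S := by
    rw [e2, ha]; field_simp
  have hV : (2 * Real.pi * Real.sqrt (1 + 2 * a ^ 2))⁻¹ = S / (2 * Real.pi * P) := by
    rw [k3]
    have := Real.pi_pos
    field_simp
  have k5 : Real.sqrt (1 - u ^ 4) = P * S := by
    rw [show (1:ℝ) - u ^ 4 = (1 + u ^ 2) * (1 - u ^ 2) by ring,
      Real.sqrt_mul (by positivity)]
  rw [integral_gauss]
  have hexp : (fun z => (S * gg (a * z) + u * z * NN (a * z)) ^ 2 * gg z) = fun z =>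
      S ^ 2 * (gg (a * z) ^ 2 * gg z) + ((2 * S * u) * (z * gg (a * z) * NN (a * z) * gg z)
        + u ^ 2 * (z ^ 2 * NN (a * z) ^ 2 * gg z)) := funext fun z => by ring
  have iBD : Integrable (fun z => (2 * S * u) * (z * gg (a * z) * NN (a * z) * gg z)
      + u ^ 2 * (z ^ 2 * NN (a * z) ^ 2 * gg z)) :=
    ((int_B a).const_mul _).add ((int_D a).const_mul _)
  rw [hexp, integral_add ((int_A a).const_mul _) iBD,
    integral_add ((int_B a).const_mul _) ((int_D a).const_mul _),
    integral_const_mul, integral_const_mul, integral_const_mul, LA, LD, LC, LB, k4, hV, hfrac, k5]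
  have hfin := final_algebra u S P (Real.arcsin (u ^ 2)) hS hP hS2 hP2
  rw [ha]
  linear_combination hfin
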